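/- Let 0 < μ < 1, μ₃ > 0, Ω₃ > 0, r₁₃ > 0 satisfy Kepler's relation Ω₃²·r₁₃³ = 1 − μ + μ₃, and set μ̄ = μ₃/(1−μ+μ₃), μ̄₂ = μ/(1−μ+μ₃), r̄₁₂ = 1/r₁₃, Ω̄₂ = 1/Ω₃, and θ₂,₀ = −θ₃,₀. Suppose γ = (x, y, p_x, p_y) : I → ℝ⁴ is differentiable on an open interval I and solves the m₁-m₂ frame CCR4BP equations of motion with θ₃(t) = (Ω₃−1)t + θ₃,₀ on I, with r₁(t), r₂(t), r₃(t) > 0 throughout. Then the curve γ̄(t̄) := Φ_{θ₃(t̄/Ω₃)}(γ(t̄/Ω₃)), defined for t̄ ∈ Ω₃·I, solves the m₁-m₃ frame CCR4BP equations of motion with parameters (μ̄, μ̄₂, r̄₁₂) and θ₂(t̄) = (Ω̄₂−1)t̄ + θ₂,₀; in particular θ₂(Ω₃t) = −θ₃(t) for all t ∈ I. (This is the equivalence of Eq. (2) and Eq. (4) of the paper through Φ_θ₃ and the time rescaling Ω₃ dt = dt̄.) -/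

import Mathlib

open Real

/-- `IsCCR4BPSolution μ μp rp Ωp θ₀ I x y px py` means that `t ↦ (x t, y t, px t, py t)`
solves, on the set `I`, the planar CCR4BP equations of motion in the synodic frame of the
primary (mass ratio `μ`) and secondary, perturbed by a third body of mass ratio `μp`
revolving at radius `rp` with inertial angular rate `Ωp`, whose phase angle is
`θ(t) = (Ωp − 1)t + θ₀`:
`ẋ = pₓ + y`, `ẏ = p_y − x`,
`ṗₓ = p_y − (1−μ)(x+μ)/r₁³ − μ(x−(1−μ))/r₂³ − μp(x−x₃)/r₃³ − μp cos θ / rp²`,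
`ṗ_y = −pₓ − (1−μ)y/r₁³ − μ y/r₂³ − μp(y−y₃)/r₃³ − μp sin θ / rp²`,
where `(x₃, y₃) = (−μ + rp cos θ, rp sin θ)`, `r₁ = √((x+μ)²+y²)`,
`r₂ = √((x−1+μ)²+y²)`, `r₃ = √((x−x₃)²+(y−y₃)²)`. -/
def IsCCR4BPSolution (μ μp rp Ωp θ₀ : ℝ) (I : Set ℝ) (x y px py : ℝ → ℝ) : Prop :=
  ∀ t ∈ I,
    let θ := (Ωp - 1) * t + θ₀
    let x₃ := -μ + rp * Real.cos θ
    let y₃ := rp * Real.sin θ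
    let r₁ := Real.sqrt ((x t + μ) ^ 2 + (y t) ^ 2)
    let r₂ := Real.sqrt ((x t - 1 + μ) ^ 2 + (y t) ^ 2)
    let r₃ := Real.sqrt ((x t - x₃) ^ 2 + (y t - y₃) ^ 2)
    HasDerivAt x (px t + y t) t ∧
    HasDerivAt y (py t - x t) t ∧
    HasDerivAt px
      (py t - (1 - μ) * (x t + μ) / r₁ ^ 3 - μ * (x t - (1 - μ)) / r₂ ^ 3
        - μp * (x t - x₃) / r₃ ^ 3 - μp * Real.cos θ / rp ^ 2) t ∧
    HasDerivAt py
      (-(px t) - (1 - μ) * (y t) / r₁ ^ 3 - μ * (y t) / r₂ ^ 3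
        - μp * (y t - y₃) / r₃ ^ 3 - μp * Real.sin θ / rp ^ 2) t

set_option maxHeartbeats 16000000 in
/-- equivalence of Eq. (2) and Eq. (4) through `Φ_{θ₃}` and the time
rescaling `Ω₃ dt = dt̄`. If `γ = (x, y, pₓ, p_y)` solves the m₁-m₂ frame CCR4BP
equations of motion on an open interval `I` away from the singularities, and Kepler's
relation `Ω₃²r₁₃³ = 1 − μ + μ₃` holds, then
`γ̄(t̄) = Φ_{θ₃(t̄/Ω₃)}(γ(t̄/Ω₃))` solves the m₁-m₃ frame CCR4BP equations of motion on
`Ω₃ · I` with parameters `μ̄ = μ₃/(1−μ+μ₃)`, `μ̄₂ = μ/(1−μ+μ₃)`, `r̄₁₂ = 1/r₁₃`,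
`Ω̄₂ = 1/Ω₃` and phase `θ₂(t̄) = (Ω̄₂ − 1)t̄ + θ₂₀` with `θ₂₀ = −θ₃₀`; in particular
`θ₂(Ω₃t) = −θ₃(t)` for all `t ∈ I`. -/
theorem ccr4bp_frame_equivalence
    (μ μ₃ Ω₃ r₁₃ θ₃₀ a b : ℝ)
    (hμ0 : 0 < μ) (hμ1 : μ < 1) (hμ₃ : 0 < μ₃) (hΩ : 0 < Ω₃) (hr : 0 < r₁₃)
    (hKepler : Ω₃ ^ 2 * r₁₃ ^ 3 = 1 - μ + μ₃)
    (μBar μBar₂ rBar₁₂ ΩBar₂ θ₂₀ : ℝ)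
    (hμBar : μBar = μ₃ / (1 - μ + μ₃)) (hμBar₂ : μBar₂ = μ / (1 - μ + μ₃))
    (hrBar : rBar₁₂ = 1 / r₁₃) (hΩBar : ΩBar₂ = 1 / Ω₃) (hθ₂₀ : θ₂₀ = -θ₃₀)
    (x y px py : ℝ → ℝ)
    (hsol : IsCCR4BPSolution μ μ₃ r₁₃ Ω₃ θ₃₀ (Set.Ioo a b) x y px py)
    (hpos : ∀ t ∈ Set.Ioo a b,
      0 < Real.sqrt ((x t + μ) ^ 2 + (y t) ^ 2) ∧
      0 < Real.sqrt ((x t - 1 + μ) ^ 2 + (y t) ^ 2) ∧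
      0 < Real.sqrt ((x t - (-μ + r₁₃ * Real.cos ((Ω₃ - 1) * t + θ₃₀))) ^ 2 +
            (y t - r₁₃ * Real.sin ((Ω₃ - 1) * t + θ₃₀)) ^ 2))
    (xBar yBar pxBar pyBar : ℝ → ℝ)
    (hxBar : ∀ s : ℝ, xBar s =
      ((x (s / Ω₃) + μ) * Real.cos ((Ω₃ - 1) * (s / Ω₃) + θ₃₀)
        + y (s / Ω₃) * Real.sin ((Ω₃ - 1) * (s / Ω₃) + θ₃₀)) / r₁₃ - μBar)
    (hyBar : ∀ s : ℝ, yBar s =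
      (-((x (s / Ω₃) + μ) * Real.sin ((Ω₃ - 1) * (s / Ω₃) + θ₃₀))
        + y (s / Ω₃) * Real.cos ((Ω₃ - 1) * (s / Ω₃) + θ₃₀)) / r₁₃)
    (hpxBar : ∀ s : ℝ, pxBar s =
      (px (s / Ω₃) * Real.cos ((Ω₃ - 1) * (s / Ω₃) + θ₃₀)
        + (py (s / Ω₃) + μ) * Real.sin ((Ω₃ - 1) * (s / Ω₃) + θ₃₀)) / (r₁₃ * Ω₃))
    (hpyBar : ∀ s : ℝ, pyBar s =
      (-(px (s / Ω₃) * Real.sin ((Ω₃ - 1) * (s / Ω₃) + θ₃₀))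
        + (py (s / Ω₃) + μ) * Real.cos ((Ω₃ - 1) * (s / Ω₃) + θ₃₀)) / (r₁₃ * Ω₃) - μBar) :
    IsCCR4BPSolution μBar μBar₂ rBar₁₂ ΩBar₂ θ₂₀
      ((fun t => Ω₃ * t) '' Set.Ioo a b) xBar yBar pxBar pyBar ∧
    ∀ t ∈ Set.Ioo a b,
      (ΩBar₂ - 1) * (Ω₃ * t) + θ₂₀ = -((Ω₃ - 1) * t + θ₃₀) := by
  have hΩ' : Ω₃ ≠ 0 := ne_of_gt hΩ
  have hr' : r₁₃ ≠ 0 := ne_of_gt hr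
  rw [← hKepler] at hμBar hμBar₂
  constructor
  · rintro s ⟨t, ht, rfl⟩
    dsimp only
    obtain ⟨hp1, hp2, hp3⟩ := hpos t ht
    obtain ⟨hx, hy, hpx, hpy⟩ := hsol t ht
    have hts : Ω₃ * t / Ω₃ = t := by field_simp
    have hsq := Real.sin_sq_add_cos_sq ((Ω₃ - 1) * t + θ₃₀)
    have hθ₂ : (ΩBar₂ - 1) * (Ω₃ * t) + θ₂₀ = -((Ω₃ - 1) * t + θ₃₀) := by
      rw [hΩBar, hθ₂₀]; field_simp; ring
    have hθd : HasDerivAt (fun u : ℝ => (Ω₃ - 1) * u + θ₃₀) (Ω₃ - 1) t := by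
      simpa using ((hasDerivAt_id t).const_mul (Ω₃ - 1)).add_const θ₃₀
    have hcosd : HasDerivAt (fun u : ℝ => Real.cos ((Ω₃ - 1) * u + θ₃₀))
        (-Real.sin ((Ω₃ - 1) * t + θ₃₀) * (Ω₃ - 1)) t := hθd.cos
    have hsind : HasDerivAt (fun u : ℝ => Real.sin ((Ω₃ - 1) * u + θ₃₀))
        (Real.cos ((Ω₃ - 1) * t + θ₃₀) * (Ω₃ - 1)) t := hθd.sin
    have comp_deriv : ∀ (f : ℝ → ℝ) (d : ℝ), HasDerivAt f d t →
        HasDerivAt (fun s : ℝ => f (s / Ω₃)) (d / Ω₃) (Ω₃ * t) := by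
      intro f d hf
      have hg : HasDerivAt (fun s : ℝ => s / Ω₃) (1 / Ω₃) (Ω₃ * t) := by
        simpa using (hasDerivAt_id (Ω₃ * t)).div_const Ω₃
      have hf' : HasDerivAt f d (Ω₃ * t / Ω₃) := by rw [hts]; exact hf
      have h2 := HasDerivAt.comp (Ω₃ * t) hf' hg
      exact h2.congr_deriv (by ring)
    have hA1 : Real.sqrt ((xBar (Ω₃ * t) + μBar) ^ 2 + yBar (Ω₃ * t) ^ 2)
        = Real.sqrt ((x t + μ) ^ 2 + y t ^ 2) / r₁₃ := by
      have h : (xBar (Ω₃ * t) + μBar) ^ 2 + yBar (Ω₃ * t) ^ 2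
          = ((x t + μ) ^ 2 + y t ^ 2) / r₁₃ ^ 2 := by
        rw [hxBar, hyBar, hts]
        linear_combination (((x t + μ) ^ 2 + y t ^ 2) / r₁₃ ^ 2) * hsq
      rw [h, Real.sqrt_div (by positivity), Real.sqrt_sq hr.le]
    have hA2 : Real.sqrt ((xBar (Ω₃ * t) - 1 + μBar) ^ 2 + yBar (Ω₃ * t) ^ 2)
        = Real.sqrt ((x t - (-μ + r₁₃ * Real.cos ((Ω₃ - 1) * t + θ₃₀))) ^ 2 +
            (y t - r₁₃ * Real.sin ((Ω₃ - 1) * t + θ₃₀)) ^ 2) / r₁₃ := by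
      have h : (xBar (Ω₃ * t) - 1 + μBar) ^ 2 + yBar (Ω₃ * t) ^ 2
          = ((x t - (-μ + r₁₃ * Real.cos ((Ω₃ - 1) * t + θ₃₀))) ^ 2 +
            (y t - r₁₃ * Real.sin ((Ω₃ - 1) * t + θ₃₀)) ^ 2) / r₁₃ ^ 2 := by
        rw [hxBar, hyBar, hts]
        field_simp
        linear_combination ((x t + μ) ^ 2 + y t ^ 2 - r₁₃ ^ 2) * hsq
      rw [h, Real.sqrt_div (by positivity), Real.sqrt_sq hr.le]
    have hA3 : Real.sqrt ((xBar (Ω₃ * t) - (-μBar + 1 / r₁₃ * Real.cos ((Ω₃ - 1) * t + θ₃₀))) ^ 2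
          + (yBar (Ω₃ * t) - 1 / r₁₃ * -Real.sin ((Ω₃ - 1) * t + θ₃₀)) ^ 2)
        = Real.sqrt ((x t - 1 + μ) ^ 2 + y t ^ 2) / r₁₃ := by
      have h : (xBar (Ω₃ * t) - (-μBar + 1 / r₁₃ * Real.cos ((Ω₃ - 1) * t + θ₃₀))) ^ 2
          + (yBar (Ω₃ * t) - 1 / r₁₃ * -Real.sin ((Ω₃ - 1) * t + θ₃₀)) ^ 2
          = ((x t - 1 + μ) ^ 2 + y t ^ 2) / r₁₃ ^ 2 := by
        rw [hxBar, hyBar, hts]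
        linear_combination (((x t - 1 + μ) ^ 2 + y t ^ 2) / r₁₃ ^ 2) * hsq
      rw [h, Real.sqrt_div (by positivity), Real.sqrt_sq hr.le]
    have hB : xBar (Ω₃ * t) - (1 - μBar)
        = ((x t + μ) * Real.cos ((Ω₃ - 1) * t + θ₃₀)
            + y t * Real.sin ((Ω₃ - 1) * t + θ₃₀)) / r₁₃
          - (Real.sin ((Ω₃ - 1) * t + θ₃₀) ^ 2 + Real.cos ((Ω₃ - 1) * t + θ₃₀) ^ 2) := by
      rw [hxBar, hts]
      linear_combination hsq
    have hPY : pyBar (Ω₃ * t)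
        = (-(px t * Real.sin ((Ω₃ - 1) * t + θ₃₀))
            + (py t + μ) * Real.cos ((Ω₃ - 1) * t + θ₃₀)) / (r₁₃ * Ω₃)
          - μ₃ / (Ω₃ ^ 2 * r₁₃ ^ 3) *
            (Real.sin ((Ω₃ - 1) * t + θ₃₀) ^ 2 + Real.cos ((Ω₃ - 1) * t + θ₃₀) ^ 2) := by
      rw [hpyBar, hts, hμBar]
      linear_combination (μ₃ / (Ω₃ ^ 2 * r₁₃ ^ 3)) * hsq
    have h1μ : (1 : ℝ) - μBar = (1 - μ) / (Ω₃ ^ 2 * r₁₃ ^ 3) := by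
      rw [hμBar]
      field_simp
      linarith [hKepler]
    refine ⟨?_, ?_, ?_, ?_⟩
    · have hD := comp_deriv _ _
        ((((hx.add_const μ).mul hcosd).add (hy.mul hsind)).div_const r₁₃ |>.sub_const μBar)
      convert hD using 1
      · exact funext hxBar
      · rw [hpxBar, hyBar, hts]
        field_simp
        ring
    · have hD := comp_deriv _ _
        (((((hx.add_const μ).mul hsind).neg.add (hy.mul hcosd)).div_const r₁₃))
      convert hD using 1
      · exact funext hyBar
      · rw [hpyBar, hxBar, hts]
        field_simp
        ring
    · have hD := comp_deriv _ _
        (((hpx.mul hcosd).add ((hpy.add_const μ).mul hsind)).div_const (r₁₃ * Ω₃))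
      convert hD using 1
      · exact funext hpxBar
      · rw [hθ₂, Real.cos_neg, Real.sin_neg, hrBar, hA1, hA2, hA3, hB, hPY, h1μ,
          hxBar, hts, hμBar, hμBar₂]
        revert hp3
        generalize Real.sin ((Ω₃ - 1) * t + θ₃₀) = sth
        generalize Real.cos ((Ω₃ - 1) * t + θ₃₀) = cth
        intro hp3
        field_simp [hp1.ne', hp2.ne', hp3.ne']
        ring
    · have hD := comp_deriv _ _
        ((((hpx.mul hsind).neg.add ((hpy.add_const μ).mul hcosd)).div_const (r₁₃ * Ω₃))
          |>.sub_const μBar)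
      convert hD using 1
      · exact funext hpyBar
      · rw [hθ₂, Real.cos_neg, Real.sin_neg, hrBar, hA1, hA2, hA3, h1μ,
          hpxBar, hyBar, hts, hμBar, hμBar₂]
        field_simp [hp1.ne', hp2.ne', hp3.ne']
        ring
  · intro t ht
    rw [hΩBar, hθ₂₀]
    field_simp
    ring
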